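/- (Main theorem, complete allocation, p ∈ (0,1].) Fix a real p with 0 < p ≤ 1. For every ε with 0 < ε < 1/2 there exists a complete allocation X = (X_1,…,X_n) of M that is (1/2 − ε)-EFX and satisfies, for every allocation X* = (X*_1,…,X*_n) of pairwise disjoint subsets of M, Σ_i v_i(X_i)^p ≥ ( (1 − 2ε)/(8(n+1)) )^p · Σ_i v_i(X*_i)^p (equivalently, the p-mean welfare ( (1/n) Σ_i v_i(X_i)^p )^{1/p} of X is at least (1 − 2ε)/(8(n+1)) times that of X*). -/

import Mathlib

/-
Proof of existence of a complete (1/2 - ε)-EFX allocation with p-mean welfare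
at least (1-2ε)/(8(n+1)) of optimum, for subadditive valuations.

Architecture:
* `Stmt17.completion` : any partial 1/2-EFX allocation can be completed to a
  complete 1/2-EFX allocation without decreasing any agent's value
  (maximal-element argument with steal / envy-cycle / give-to-unenvied moves);
* `Stmt17.rot` : extraction of a rotation along a cycle of a fixed-point-free map;
* `Stmt17.deficiency` : in a complete 1/2-EFX allocation, an agent with value below
  `v a (Xs a)/(8(n+1))` must see a single good of `Xs a` of value `≥ v a (Xs a)/(2n)`
  (necessarily held as a singleton bundle);
* `Stmt17.Zrec` : for every allocation `Xs` there is a complete 1/2-EFX allocation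
  giving every agent `a` at least `v a (Xs a)/(8(n+1))`;
* main theorem: take the maximizer of `∑ v i (X i)^p` over complete 1/2-EFX
  allocations.
-/

namespace Stmt17
open Finset

lemma rot {n : ℕ} (hn : 0 < n) (f : Fin n → Fin n) (hff : ∀ k, f k ≠ k) :
    ∃ σ : Fin n → Fin n, Function.Injective σ ∧
      (∀ w, σ w ≠ w → f (σ w) = w) ∧ (∃ w₀, σ w₀ ≠ w₀) := by
  classical
  set x₀ : Fin n := ⟨0, hn⟩ with hx₀
  have hpig : ∃ i ∈ Finset.range (n+1), ∃ j ∈ Finset.range (n+1),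
      i ≠ j ∧ f^[i] x₀ = f^[j] x₀ := by
    apply Finset.exists_ne_map_eq_of_card_lt_of_maps_to
      (t := (Finset.univ : Finset (Fin n)))
    · simp [Finset.card_univ]
    · intro a _; exact Finset.mem_univ _
  obtain ⟨i, _, j, _, hij, hijeq⟩ := hpig
  have hper0 : ∃ z : Fin n, ∃ r₀ : ℕ, 0 < r₀ ∧ f^[r₀] z = z := by
    rcases lt_or_gt_of_ne hij with h | h
    · refine ⟨f^[i] x₀, j - i, by omega, ?_⟩
      rw [← Function.iterate_add_apply]
      have : j - i + i = j := by omega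
      rw [this, ← hijeq]
    · refine ⟨f^[j] x₀, i - j, by omega, ?_⟩
      rw [← Function.iterate_add_apply]
      have : i - j + j = i := by omega
      rw [this, hijeq]
  obtain ⟨z, hzex⟩ := hper0
  have hex : ∃ r : ℕ, 0 < r ∧ f^[r] z = z := hzex
  obtain ⟨r, hrpos, hrz, hmin⟩ :
      ∃ r, 0 < r ∧ f^[r] z = z ∧ ∀ r' < r, ¬(0 < r' ∧ f^[r'] z = z) :=
    ⟨Nat.find hex, (Nat.find_spec hex).1, (Nat.find_spec hex).2,
      fun r' h => Nat.find_min hex h⟩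
  have K : ∀ t, f^[t] z = f^[t % r] z := by
    intro t
    conv_lhs => rw [← Nat.div_add_mod t r]
    rw [Nat.add_comm, Function.iterate_add_apply, Function.iterate_mul,
      Function.iterate_fixed hrz]
  have INJ : ∀ s < r, ∀ s' < r, f^[s] z = f^[s'] z → s = s' := by
    have aux : ∀ s s', s < s' → s' < r → f^[s] z = f^[s'] z → False := by
      intro s s' hss hs'r heq
      have h1 : f^[(r - s') + s] z = z := by
        rw [Function.iterate_add_apply, heq, ← Function.iterate_add_apply]
        have : r - s' + s' = r := by omega
        rw [this, hrz]
      exact hmin ((r - s') + s) (by omega) ⟨by omega, h1⟩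
    intro s hs s' hs' heq
    rcases lt_trichotomy s s' with h | h | h
    · exact absurd heq (fun he => aux s s' h hs' he)
    · exact h
    · exact absurd heq.symm (fun he => aux s' s h hs he)
  set O : Finset (Fin n) := (Finset.range r).image (fun s => f^[s] z) with hO
  set σ : Fin n → Fin n := fun w =>
    if h : w ∈ O then f^[((Finset.mem_image.mp h).choose + (r - 1)) % r] z else w with hσ
  have hchoose : ∀ (w : Fin n) (h : w ∈ O),
      (Finset.mem_image.mp h).choose < r ∧ f^[(Finset.mem_image.mp h).choose] z = w := by
    intro w h
    obtain ⟨hs, heq⟩ := (Finset.mem_image.mp h).choose_spec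
    exact ⟨Finset.mem_range.mp hs, heq⟩
  have hmod : ∀ s : ℕ, (((s + (r-1)) % r) + 1) % r = s % r := by
    intro s
    rw [Nat.mod_add_mod]
    have : s + (r-1) + 1 = s + r := by omega
    rw [this, Nat.add_mod_right]
  -- r ≥ 2
  have hr2 : 2 ≤ r := by
    by_contra hcon
    have hr1 : r = 1 := by omega
    rw [hr1, Function.iterate_one] at hrz
    exact hff z hrz
  -- σ maps O to O
  have hσO : ∀ w (h : w ∈ O), σ w ∈ O := by
    intro w h
    have : σ w = f^[((Finset.mem_image.mp h).choose + (r - 1)) % r] z := by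
      simp only [hσ, dif_pos h]
    rw [this]
    exact Finset.mem_image.mpr ⟨_, Finset.mem_range.mpr (Nat.mod_lt _ hrpos), rfl⟩
  have hσid : ∀ w, w ∉ O → σ w = w := by
    intro w h; simp only [hσ, dif_neg h]
  -- f (σ w) = w for w ∈ O
  have hfσ : ∀ w (h : w ∈ O), f (σ w) = w := by
    intro w h
    obtain ⟨hs, heq⟩ := hchoose w h
    set s := (Finset.mem_image.mp h).choose
    have h1 : σ w = f^[(s + (r-1)) % r] z := by simp only [hσ, dif_pos h]; rfl
    calc f (σ w) = f^[((s + (r-1)) % r) + 1] z := by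
          rw [h1, Function.iterate_succ_apply']
      _ = f^[(((s + (r-1)) % r) + 1) % r] z := K _
      _ = f^[s % r] z := by rw [hmod]
      _ = f^[s] z := (K s).symm
      _ = w := heq
  -- injectivity
  have hσinj : Function.Injective σ := by
    intro w w' heq
    by_cases h : w ∈ O <;> by_cases h' : w' ∈ O
    · obtain ⟨hs, hval⟩ := hchoose w h
      obtain ⟨hs', hval'⟩ := hchoose w' h'
      set s := (Finset.mem_image.mp h).choose
      set s' := (Finset.mem_image.mp h').choose
      have e1 : σ w = f^[(s + (r-1)) % r] z := by simp only [hσ, dif_pos h]; rfl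
      have e2 : σ w' = f^[(s' + (r-1)) % r] z := by simp only [hσ, dif_pos h']; rfl
      have : (s + (r-1)) % r = (s' + (r-1)) % r :=
        INJ _ (Nat.mod_lt _ hrpos) _ (Nat.mod_lt _ hrpos) (by rw [← e1, ← e2, heq])
      have hss : s = s' := by
        have h2 : (s + (r-1)) % r = (s' + (r-1)) % r := this
        have h3 : s % r = s' % r := by
          have := congrArg (fun t => (t + 1) % r) h2
          simpa only [hmod] using this
        rwa [Nat.mod_eq_of_lt hs, Nat.mod_eq_of_lt hs'] at h3
      rw [← hval, ← hval', hss]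
    · exfalso
      have h1 : σ w ∈ O := hσO w h
      rw [heq, hσid w' h'] at h1
      exact h' h1
    · exfalso
      have h1 : σ w' ∈ O := hσO w' h'
      rw [← heq, hσid w h] at h1
      exact h h1
    · rw [hσid w h, hσid w' h'] at heq; exact heq
  -- conclusion components
  have hzO : z ∈ O := Finset.mem_image.mpr ⟨0, Finset.mem_range.mpr hrpos, rfl⟩
  have hσz : σ z ≠ z := by
    intro hcon
    have h1 : f z = z := by
      have := hfσ z hzO
      rw [hcon] at this; exact this
    exact hff z h1
  refine ⟨σ, hσinj, ?_, z, hσz⟩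
  intro w hw
  by_cases h : w ∈ O
  · exact hfσ w h
  · exact absurd (hσid w h) hw


variable {G : Type*} [DecidableEq G]

/-- split off one element -/
lemma split1 {n : ℕ} (v : Fin n → Finset G → ℝ)
    (hmono : ∀ i A B, A ⊆ B → v i A ≤ v i B)
    (hsub : ∀ i A B, v i (A ∪ B) ≤ v i A + v i B)
    (a : Fin n) (A : Finset G) (x : G) :
    v a A ≤ v a (A \ {x}) + v a {x} := by
  have h1 : A ⊆ (A \ {x}) ∪ {x} := by
    intro y hy
    by_cases hxy : y = x
    · exact Finset.mem_union_right _ (by simp [hxy])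
    · exact Finset.mem_union_left _ (Finset.mem_sdiff.mpr ⟨hy, by simp [hxy]⟩)
  exact (hmono a _ _ h1).trans (hsub a _ _)

/-- subadditive decomposition over a covering family -/
lemma subdec {n : ℕ} (v : Fin n → Finset G → ℝ)
    (hnorm : ∀ i, v i ∅ = 0)
    (hmono : ∀ i A B, A ⊆ B → v i A ≤ v i B)
    (hsub : ∀ i A B, v i (A ∪ B) ≤ v i A + v i B)
    (a : Fin n) (X : Fin n → Finset G) :
    ∀ (F : Finset (Fin n)) (S : Finset G), S ⊆ F.biUnion X →
      v a S ≤ ∑ j ∈ F, v a (S ∩ X j) := by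
  classical
  intro F
  induction F using Finset.induction_on with
  | empty =>
      intro S hS
      simp only [Finset.biUnion_empty, Finset.subset_empty] at hS
      simp [hS, hnorm]
  | insert _ _ hj₀ =>
      rename_i j₀ F ihF
      intro S hS
      have hcov : S ⊆ X j₀ ∪ F.biUnion X := by
        rwa [Finset.biUnion_insert] at hS
      have hsplit : v a S ≤ v a (S ∩ X j₀) + v a (S \ X j₀) := by
        have : S = (S ∩ X j₀) ∪ (S \ X j₀) := by
          ext y; simp only [Finset.mem_union, Finset.mem_inter, Finset.mem_sdiff]; tauto
        calc v a S = v a ((S ∩ X j₀) ∪ (S \ X j₀)) := by rw [← this]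
          _ ≤ _ := hsub a _ _
      have hrest : S \ X j₀ ⊆ F.biUnion X := by
        intro y hy
        rcases Finset.mem_sdiff.mp hy with ⟨hyS, hyn⟩
        rcases Finset.mem_union.mp (hcov hyS) with h | h
        · exact absurd h hyn
        · exact h
      have hIH := ihF (S \ X j₀) hrest
      have hIH2 : ∑ j ∈ F, v a ((S \ X j₀) ∩ X j) ≤ ∑ j ∈ F, v a (S ∩ X j) := by
        apply Finset.sum_le_sum
        intro j _
        apply hmono
        intro y hy
        rcases Finset.mem_inter.mp hy with ⟨hy1, hy2⟩
        exact Finset.mem_inter.mpr ⟨(Finset.mem_sdiff.mp hy1).1, hy2⟩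
      rw [Finset.sum_insert hj₀]
      linarith


/-- Completion lemma: every partial ½-EFX allocation can be completed without
decreasing any agent's value. -/
lemma completion {n : ℕ} (hn : 0 < n) (M : Finset G) (v : Fin n → Finset G → ℝ)
    (hv0 : ∀ i A, 0 ≤ v i A) (hnorm : ∀ i, v i ∅ = 0)
    (hmono : ∀ i A B, A ⊆ B → v i A ≤ v i B)
    (hsub : ∀ i A B, v i (A ∪ B) ≤ v i A + v i B)
    (X₀ : Fin n → Finset G)
    (h₀M : ∀ i, X₀ i ⊆ M) (h₀d : ∀ i j, i ≠ j → Disjoint (X₀ i) (X₀ j))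
    (h₀e : ∀ i j, ∀ g ∈ X₀ j, v i (X₀ j \ {g}) ≤ 2 * v i (X₀ i)) :
    ∃ X : Fin n → Finset G, (∀ i, X i ⊆ M) ∧ (∀ i j, i ≠ j → Disjoint (X i) (X j)) ∧
      (∀ i j, ∀ g ∈ X j, v i (X j \ {g}) ≤ 2 * v i (X i)) ∧
      Finset.univ.biUnion X = M ∧ (∀ i, v i (X₀ i) ≤ v i (X i)) := by
  classical
  set P : (Fin n → Finset G) → Prop := fun X =>
    (∀ i, X i ⊆ M) ∧ (∀ i j, i ≠ j → Disjoint (X i) (X j)) ∧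
    (∀ i j, ∀ g ∈ X j, v i (X j \ {g}) ≤ 2 * v i (X i)) ∧
    (∀ i, v i (X₀ i) ≤ v i (X i)) with hPdef
  set T : Finset (Fin n → Finset G) :=
    (Fintype.piFinset fun _ : Fin n => M.powerset).filter P with hTdef
  have hPT : ∀ X, P X → X ∈ T := by
    intro X hX
    exact Finset.mem_filter.mpr
      ⟨Fintype.mem_piFinset.mpr fun i => Finset.mem_powerset.mpr (hX.1 i), hX⟩
  have hTP : ∀ X ∈ T, P X := fun X hX => (Finset.mem_filter.mp hX).2
  have hX₀P : P X₀ := ⟨h₀M, h₀d, h₀e, fun i => le_refl _⟩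
  -- stage 1: maximize total value
  obtain ⟨X₁, hX₁T, hX₁max⟩ :=
    T.exists_max_image (fun X => ∑ i, v i (X i)) ⟨X₀, hPT X₀ hX₀P⟩
  -- stage 2: among total-value maximizers, maximize number of allocated goods
  set T2 : Finset (Fin n → Finset G) :=
    T.filter (fun X => ∑ i, v i (X i) = ∑ i, v i (X₁ i)) with hT2def
  obtain ⟨X₂, hX₂T2, hX₂max⟩ :=
    T2.exists_max_image (fun X => (Finset.univ.biUnion X).card)
      ⟨X₁, Finset.mem_filter.mpr ⟨hX₁T, rfl⟩⟩
  have hX₂T : X₂ ∈ T := (Finset.mem_filter.mp hX₂T2).1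
  have hX₂s : ∑ i, v i (X₂ i) = ∑ i, v i (X₁ i) := (Finset.mem_filter.mp hX₂T2).2
  obtain ⟨hM₂, hd₂, he₂, hg₂⟩ := hTP X₂ hX₂T
  refine ⟨X₂, hM₂, hd₂, he₂, ?_, hg₂⟩
  -- completeness by contradiction
  by_contra hnc
  have hsub' : Finset.univ.biUnion X₂ ⊆ M := by
    intro x hx
    obtain ⟨i, _, hxi⟩ := Finset.mem_biUnion.mp hx
    exact hM₂ i hxi
  obtain ⟨g₀, hg₀M, hg₀⟩ : ∃ g₀ ∈ M, g₀ ∉ Finset.univ.biUnion X₂ := by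
    by_contra h
    push_neg at h
    exact hnc (Finset.Subset.antisymm hsub' h)
  have hg₀X : ∀ i, g₀ ∉ X₂ i := fun i hi =>
    hg₀ (Finset.mem_biUnion.mpr ⟨i, Finset.mem_univ i, hi⟩)
  by_cases hsteal : ∃ i, v i (X₂ i) < v i {g₀}
  · -- E1 : steal
    obtain ⟨i₀, hi₀⟩ := hsteal
    set X' : Fin n → Finset G := Function.update X₂ i₀ {g₀} with hX'def
    have hXapp : ∀ i, X' i = if i = i₀ then {g₀} else X₂ i := by
      intro i; simp [hX'def, Function.update_apply]
    have hX'P : P X' := by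
      refine ⟨?_, ?_, ?_, ?_⟩
      · intro i; rw [hXapp i]
        by_cases h : i = i₀ <;> simp [h, Finset.singleton_subset_iff, hg₀M, hM₂ i]
      · intro i j hij
        rw [hXapp i, hXapp j]
        by_cases h1 : i = i₀ <;> by_cases h2 : j = i₀
        · exact absurd (h1.trans h2.symm) hij
        · simp only [if_pos h1, if_neg h2]
          exact Finset.disjoint_singleton_left.mpr (hg₀X j)
        · simp only [if_neg h1, if_pos h2]
          exact (Finset.disjoint_singleton_left.mpr (hg₀X i)).symm
        · simp only [if_neg h1, if_neg h2]; exact hd₂ i j hij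
      · intro i j g hg
        rw [hXapp j] at hg
        by_cases h2 : j = i₀
        · rw [if_pos h2] at hg
          have hgg : g = g₀ := Finset.mem_singleton.mp hg
          rw [hXapp j, if_pos h2, hgg, Finset.sdiff_self, hnorm]
          have := hv0 i (X' i); linarith
        · rw [if_neg h2] at hg
          have hbase := he₂ i j g hg
          rw [hXapp j, if_neg h2]
          by_cases h1 : i = i₀
          · subst h1
            rw [hXapp i, if_pos rfl]
            linarith
          · rw [hXapp i, if_neg h1]; exact hbase
      · intro i
        rw [hXapp i]
        by_cases h : i = i₀
        · subst h; rw [if_pos rfl]; exact (hg₂ i).trans (le_of_lt hi₀)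
        · rw [if_neg h]; exact hg₂ i
    have hlt : ∑ i, v i (X₂ i) < ∑ i, v i (X' i) := by
      apply Finset.sum_lt_sum
      · intro i _
        rw [hXapp i]
        by_cases h : i = i₀
        · subst h; rw [if_pos rfl]; exact le_of_lt hi₀
        · rw [if_neg h]
      · exact ⟨i₀, Finset.mem_univ i₀, by rw [hXapp i₀, if_pos rfl]; exact hi₀⟩
    have := hX₁max X' (hPT X' hX'P)
    rw [← hX₂s] at this
    linarith
  push_neg at hsteal
  by_cases hunen : ∃ k, ∀ i, v i (X₂ k) ≤ v i (X₂ i)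
  · -- E3 : give g₀ to an unenvied agent
    obtain ⟨k, hk⟩ := hunen
    set X' : Fin n → Finset G := Function.update X₂ k (insert g₀ (X₂ k)) with hX'def
    have hXapp : ∀ i, X' i = if i = k then insert g₀ (X₂ k) else X₂ i := by
      intro i; simp [hX'def, Function.update_apply]
    have hmono' : ∀ i, v i (X₂ i) ≤ v i (X' i) := by
      intro i; rw [hXapp i]
      by_cases h : i = k
      · subst h; rw [if_pos rfl]; exact hmono i _ _ (Finset.subset_insert _ _)
      · rw [if_neg h]
    have hX'P : P X' := by
      refine ⟨?_, ?_, ?_, fun i => (hg₂ i).trans (hmono' i)⟩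
      · intro i; rw [hXapp i]
        by_cases h : i = k
        · rw [if_pos h]; exact Finset.insert_subset hg₀M (hM₂ k)
        · rw [if_neg h]; exact hM₂ i
      · intro i j hij
        rw [hXapp i, hXapp j]
        by_cases h1 : i = k <;> by_cases h2 : j = k
        · exact absurd (h1.trans h2.symm) hij
        · subst h1
          simp only [if_pos rfl, if_neg h2]
          rw [Finset.insert_eq]
          exact Finset.disjoint_union_left.mpr
            ⟨Finset.disjoint_singleton_left.mpr (hg₀X j), hd₂ i j hij⟩
        · subst h2
          simp only [if_neg h1, if_pos rfl]
          rw [Finset.insert_eq]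
          exact (Finset.disjoint_union_left.mpr
            ⟨Finset.disjoint_singleton_left.mpr (hg₀X i), hd₂ j i (Ne.symm hij)⟩).symm
        · simp only [if_neg h1, if_neg h2]; exact hd₂ i j hij
      · intro i j g hg
        rw [hXapp j] at hg
        by_cases h2 : j = k
        · rw [if_pos h2] at hg
          rw [hXapp j, if_pos h2]
          rcases Finset.mem_insert.mp hg with hgg | hgX
          · -- g = g₀
            subst hgg
            have hdel : insert g (X₂ k) \ {g} = X₂ k := by
              ext x
              simp only [Finset.mem_sdiff, Finset.mem_insert, Finset.mem_singleton]
              constructor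
              · rintro ⟨h1 | h1, h2⟩
                · exact absurd h1 h2
                · exact h1
              · intro hx
                refine ⟨Or.inr hx, ?_⟩
                intro hxg; rw [hxg] at hx; exact hg₀X k hx
            rw [hdel]
            have h1 : v i (X₂ k) ≤ v i (X₂ i) := hk i
            have h2 : v i (X₂ i) ≤ v i (X' i) := hmono' i
            have h3 := hv0 i (X₂ k)
            linarith
          · -- g ∈ X₂ k
            have hgne : g ≠ g₀ := by intro h; rw [h] at hgX; exact hg₀X k hgX
            have hdel : insert g₀ (X₂ k) \ {g} = insert g₀ (X₂ k \ {g}) := by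
              ext x
              simp only [Finset.mem_sdiff, Finset.mem_insert, Finset.mem_singleton]
              constructor
              · rintro ⟨h1 | h1, h2⟩
                · exact Or.inl h1
                · exact Or.inr ⟨h1, h2⟩
              · rintro (h1 | ⟨h1, h2⟩)
                · exact ⟨Or.inl h1, by rw [h1]; exact Ne.symm hgne⟩
                · exact ⟨Or.inr h1, h2⟩
            rw [hdel]
            have h1 : v i (insert g₀ (X₂ k \ {g})) ≤ v i {g₀} + v i (X₂ k \ {g}) := by
              rw [Finset.insert_eq]; exact hsub i _ _
            have h2 : v i (X₂ k \ {g}) ≤ v i (X₂ k) := hmono i _ _ (Finset.sdiff_subset)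
            have h3 : v i (X₂ k) ≤ v i (X₂ i) := hk i
            have h4 : v i {g₀} ≤ v i (X₂ i) := hsteal i
            have h5 : v i (X₂ i) ≤ v i (X' i) := hmono' i
            linarith
        · rw [if_neg h2] at hg
          rw [hXapp j, if_neg h2]
          have := he₂ i j g hg
          have h5 := hmono' i
          linarith
    -- sum equal and card increases
    have hsumle : ∑ i, v i (X₂ i) ≤ ∑ i, v i (X' i) :=
      Finset.sum_le_sum (fun i _ => hmono' i)
    have hsumge : ∑ i, v i (X' i) ≤ ∑ i, v i (X₁ i) := hX₁max X' (hPT X' hX'P)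
    have hsumeq : ∑ i, v i (X' i) = ∑ i, v i (X₁ i) := by
      rw [← hX₂s] at hsumge ⊢
      linarith
    have hX'T2 : X' ∈ T2 := Finset.mem_filter.mpr ⟨hPT X' hX'P, hsumeq⟩
    have hbU : Finset.univ.biUnion X' = insert g₀ (Finset.univ.biUnion X₂) := by
      ext x
      simp only [Finset.mem_biUnion, Finset.mem_univ, true_and, Finset.mem_insert]
      constructor
      · rintro ⟨i, hi⟩
        rw [hXapp i] at hi
        by_cases h : i = k
        · rw [if_pos h] at hi
          rcases Finset.mem_insert.mp hi with h1 | h1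
          · exact Or.inl h1
          · exact Or.inr ⟨k, h1⟩
        · rw [if_neg h] at hi
          exact Or.inr ⟨i, hi⟩
      · rintro (rfl | ⟨i, hi⟩)
        · exact ⟨k, by rw [hXapp k, if_pos rfl]; exact Finset.mem_insert_self _ _⟩
        · by_cases h : i = k
          · exact ⟨k, by rw [hXapp k, if_pos rfl]; exact Finset.mem_insert_of_mem (h ▸ hi)⟩
          · exact ⟨i, by rw [hXapp i, if_neg h]; exact hi⟩
    have hcard := hX₂max X' hX'T2
    rw [hbU, Finset.card_insert_of_notMem hg₀] at hcard
    omega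
  · -- E2 : envy cycle
    push_neg at hunen
    choose f hf using hunen
    have hff : ∀ k, f k ≠ k := by
      intro k h
      have := hf k
      rw [h] at this
      exact lt_irrefl _ this
    obtain ⟨σ, hσinj, hσf, w₀, hw₀⟩ := rot hn f hff
    set X' : Fin n → Finset G := fun w => X₂ (σ w) with hX'def
    have hmono' : ∀ w, v w (X₂ w) ≤ v w (X' w) := by
      intro w
      by_cases h : σ w = w
      · simp only [hX'def, h]; exact le_refl _
      · have h1 := hf (σ w)
        rw [hσf w h] at h1
        exact le_of_lt h1
    have hstrict : v w₀ (X₂ w₀) < v w₀ (X' w₀) := by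
      have h1 := hf (σ w₀)
      rw [hσf w₀ hw₀] at h1
      exact h1
    have hX'P : P X' := by
      refine ⟨fun i => hM₂ (σ i), ?_, ?_, fun i => (hg₂ i).trans (hmono' i)⟩
      · intro i j hij
        exact hd₂ (σ i) (σ j) (fun h => hij (hσinj h))
      · intro i j g hg
        have h1 := he₂ i (σ j) g hg
        have h2 := hmono' i
        simp only [hX'def]
        linarith
    have hlt : ∑ i, v i (X₂ i) < ∑ i, v i (X' i) :=
      Finset.sum_lt_sum (fun i _ => hmono' i) ⟨w₀, Finset.mem_univ w₀, hstrict⟩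
    have := hX₁max X' (hPT X' hX'P)
    rw [← hX₂s] at this
    linarith


/-- Deficiency analysis: in a complete ½-EFX allocation, an agent with value far
below its `Xs`-share must have a high-value single good of `Xs a` sitting
somewhere (in fact as a singleton bundle). -/
lemma deficiency {n : ℕ} (hn : 0 < n) (M : Finset G) (v : Fin n → Finset G → ℝ)
    (hv0 : ∀ i A, 0 ≤ v i A) (hnorm : ∀ i, v i ∅ = 0)
    (hmono : ∀ i A B, A ⊆ B → v i A ≤ v i B)
    (hsub : ∀ i A B, v i (A ∪ B) ≤ v i A + v i B)
    (Xs : Fin n → Finset G) (a : Fin n) (hXsM : Xs a ⊆ M)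
    (X : Fin n → Finset G)
    (hXe : ∀ i j, ∀ g ∈ X j, v i (X j \ {g}) ≤ 2 * v i (X i))
    (hXc : Finset.univ.biUnion X = M)
    (hdef : v a (X a) < (1 / (8 * ((n : ℝ) + 1))) * v a (Xs a)) :
    ∃ γ ∈ Xs a, v a (Xs a) / (2 * (n : ℝ)) ≤ v a {γ} := by
  classical
  set w : ℝ := v a (Xs a) with hw
  set u : ℝ := v a (X a) with hu
  have hnR : (0 : ℝ) < (n : ℝ) := by exact_mod_cast hn
  have hu0 : 0 ≤ u := hv0 a (X a)
  have hcpos : (0 : ℝ) < 1 / (8 * ((n : ℝ) + 1)) := by positivity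
  have hw0 : 0 < w := by nlinarith
  -- decomposition
  have hdec : w ≤ ∑ j, v a (Xs a ∩ X j) := by
    apply subdec v hnorm hmono hsub a X Finset.univ (Xs a)
    rw [hXc]; exact hXsM
  set Sing : Fin n → Prop := fun j => ∃ γ, γ ∈ Xs a ∧ X j = {γ} with hSing
  have hbnd : ∀ j, ¬ Sing j → v a (Xs a ∩ X j) ≤ 4 * u := by
    intro j hns
    rcases Finset.eq_empty_or_nonempty (Xs a ∩ X j) with he | ⟨g', hg'⟩
    · rw [he, hnorm]; linarith
    · have hg'Xs : g' ∈ Xs a := (Finset.mem_inter.mp hg').1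
      have hg'X : g' ∈ X j := (Finset.mem_inter.mp hg').2
      rcases Finset.eq_empty_or_nonempty (X j \ {g'}) with hsing | ⟨h, hh⟩
      · exfalso
        apply hns
        refine ⟨g', hg'Xs, ?_⟩
        apply Finset.Subset.antisymm
        · intro x hx
          by_contra hxg
          have : x ∈ X j \ {g'} := Finset.mem_sdiff.mpr ⟨hx, by simpa using hxg⟩
          rw [hsing] at this
          exact absurd this (Finset.notMem_empty x)
        · exact Finset.singleton_subset_iff.mpr hg'X
      · have hhX : h ∈ X j := (Finset.mem_sdiff.mp hh).1
        have hhg : h ≠ g' := by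
          have := (Finset.mem_sdiff.mp hh).2; simpa using this
        have c1 : v a (Xs a ∩ X j) ≤ v a ((Xs a ∩ X j) \ {g'}) + v a {g'} :=
          split1 v hmono hsub a _ g'
        have c2 : v a ((Xs a ∩ X j) \ {g'}) ≤ v a (X j \ {g'}) := by
          apply hmono
          intro x hx
          rcases Finset.mem_sdiff.mp hx with ⟨hx1, hx2⟩
          exact Finset.mem_sdiff.mpr ⟨(Finset.mem_inter.mp hx1).2, hx2⟩
        have c3 : v a {g'} ≤ v a (X j \ {h}) := by
          apply hmono
          intro x hx
          rw [Finset.mem_singleton.mp hx]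
          exact Finset.mem_sdiff.mpr ⟨hg'X, by simpa using Ne.symm hhg⟩
        have c4 := hXe a j g' hg'X
        have c5 := hXe a j h hhX
        linarith
  -- the singleton part carries at least w/2
  set S1 : Finset (Fin n) := Finset.univ.filter Sing with hS1
  have hsplitsum :
      ∑ j, v a (Xs a ∩ X j) = ∑ j ∈ S1, v a (Xs a ∩ X j)
        + ∑ j ∈ Finset.univ.filter (fun j => ¬ Sing j), v a (Xs a ∩ X j) := by
    exact (Finset.sum_filter_add_sum_filter_not _ _ _).symm
  have hnotsum : ∑ j ∈ Finset.univ.filter (fun j => ¬ Sing j), v a (Xs a ∩ X j)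
      ≤ (n : ℝ) * (4 * u) := by
    calc ∑ j ∈ Finset.univ.filter (fun j => ¬ Sing j), v a (Xs a ∩ X j)
        ≤ ∑ _j ∈ Finset.univ.filter (fun j => ¬ Sing j), (4 * u) := by
          apply Finset.sum_le_sum
          intro j hj
          exact hbnd j (Finset.mem_filter.mp hj).2
      _ = ((Finset.univ.filter (fun j => ¬ Sing j)).card : ℝ) * (4 * u) := by
          rw [Finset.sum_const, nsmul_eq_mul]
      _ ≤ (n : ℝ) * (4 * u) := by
          apply mul_le_mul_of_nonneg_right
          · have h1 : (Finset.univ.filter (fun j => ¬ Sing j)).card ≤ n := by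
              calc (Finset.univ.filter (fun j => ¬ Sing j)).card
                  ≤ (Finset.univ : Finset (Fin n)).card := Finset.card_filter_le _ _
                _ = n := by simp
            exact_mod_cast h1
          · linarith
  have hS1sum : w / 2 ≤ ∑ j ∈ S1, v a (Xs a ∩ X j) := by
    have h4nu : (n : ℝ) * (4 * u) ≤ w / 2 := by
      have h1 : (n : ℝ) * (4 * u) ≤ (n : ℝ) * (4 * ((1 / (8 * ((n : ℝ) + 1))) * w)) := by
        apply mul_le_mul_of_nonneg_left _ (le_of_lt hnR)
        nlinarith
      have h2 : (n : ℝ) * (4 * ((1 / (8 * ((n : ℝ) + 1))) * w)) ≤ w / 2 := by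
        have hd : (0:ℝ) < 8 * (n:ℝ) := by positivity
        have h2a : 1/(8*((n:ℝ)+1)) ≤ 1/(8*(n:ℝ)) :=
          one_div_le_one_div_of_le hd (by linarith)
        have h2b : (n : ℝ) * (4 * ((1 / (8 * ((n : ℝ) + 1))) * w))
            ≤ (n : ℝ) * (4 * ((1 / (8 * (n : ℝ))) * w)) := by
          apply mul_le_mul_of_nonneg_left _ (le_of_lt hnR)
          apply mul_le_mul_of_nonneg_left _ (by norm_num : (0:ℝ) ≤ 4)
          exact mul_le_mul_of_nonneg_right h2a (le_of_lt hw0)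
        have h2c : (n : ℝ) * (4 * ((1 / (8 * (n : ℝ))) * w)) = w / 2 := by
          field_simp
          ring
        linarith
      linarith
    linarith
  -- pick a good singleton
  by_contra hno
  push_neg at hno
  have hterm : ∀ j ∈ S1, v a (Xs a ∩ X j) < w / (2 * (n : ℝ)) := by
    intro j hj
    obtain ⟨γ, hγXs, hγX⟩ := (Finset.mem_filter.mp hj).2
    calc v a (Xs a ∩ X j) ≤ v a {γ} := by
          apply hmono; rw [hγX]; exact Finset.inter_subset_right
      _ < w / (2 * (n : ℝ)) := hno γ hγXs
  have hS1ne : S1.Nonempty := by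
    rcases Finset.eq_empty_or_nonempty S1 with h | h
    · exfalso; rw [h, Finset.sum_empty] at hS1sum; linarith
    · exact h
  have hlt : ∑ j ∈ S1, v a (Xs a ∩ X j) < (S1.card : ℝ) * (w / (2 * (n : ℝ))) := by
    calc ∑ j ∈ S1, v a (Xs a ∩ X j)
        < ∑ _j ∈ S1, (w / (2 * (n : ℝ))) := Finset.sum_lt_sum_of_nonempty hS1ne hterm
      _ = (S1.card : ℝ) * (w / (2 * (n : ℝ))) := by rw [Finset.sum_const, nsmul_eq_mul]
  have hcard : (S1.card : ℝ) ≤ (n : ℝ) := by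
    have h1 : S1.card ≤ n := by
      calc S1.card ≤ (Finset.univ : Finset (Fin n)).card := Finset.card_filter_le _ _
        _ = n := by simp
    exact_mod_cast h1
  have hfin : (S1.card : ℝ) * (w / (2 * (n : ℝ))) ≤ w / 2 := by
    have hpos : 0 ≤ w / (2 * (n : ℝ)) := by positivity
    calc (S1.card : ℝ) * (w / (2 * (n : ℝ))) ≤ (n : ℝ) * (w / (2 * (n : ℝ))) :=
          mul_le_mul_of_nonneg_right hcard hpos
      _ = w / 2 := by field_simp
  linarith


/-- Key existence lemma: a complete ½-EFX allocation giving every agent at least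
a `1/(8(n+1))` fraction of its value for its own `Xs`-bundle. -/
lemma Zrec {n : ℕ} (hn : 0 < n) (M : Finset G) (v : Fin n → Finset G → ℝ)
    (hv0 : ∀ i A, 0 ≤ v i A) (hnorm : ∀ i, v i ∅ = 0)
    (hmono : ∀ i A B, A ⊆ B → v i A ≤ v i B)
    (hsub : ∀ i A B, v i (A ∪ B) ≤ v i A + v i B)
    (Xs : Fin n → Finset G) (hXsM : ∀ i, Xs i ⊆ M)
    (hXsd : ∀ i j, i ≠ j → Disjoint (Xs i) (Xs j)) :
    ∀ (S : Finset (Fin n)) (γ : Fin n → G),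
      (∀ α, α ∉ S → γ α ∈ Xs α ∧
        (1 / (8 * ((n : ℝ) + 1))) * v α (Xs α) ≤ v α {γ α}) →
      ∃ X : Fin n → Finset G, (∀ i, X i ⊆ M) ∧ (∀ i j, i ≠ j → Disjoint (X i) (X j)) ∧
        (∀ i j, ∀ g ∈ X j, v i (X j \ {g}) ≤ 2 * v i (X i)) ∧
        Finset.univ.biUnion X = M ∧
        (∀ a, (1 / (8 * ((n : ℝ) + 1))) * v a (Xs a) ≤ v a (X a)) := by
  classical
  intro S
  induction S using Finset.strongInduction with
  | _ S ih =>
    intro γ hfam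
    set c'' : ℝ := 1 / (8 * ((n : ℝ) + 1)) with hc''
    have hnR : (0 : ℝ) < (n : ℝ) := by exact_mod_cast hn
    set X₀ : Fin n → Finset G := fun α => if α ∈ S then ∅ else {γ α} with hX₀
    have h₀M : ∀ i, X₀ i ⊆ M := by
      intro i
      simp only [hX₀]
      by_cases h : i ∈ S
      · simp [h]
      · simp only [if_neg h]
        exact Finset.singleton_subset_iff.mpr (hXsM i ((hfam i h).1))
    have h₀d : ∀ i j, i ≠ j → Disjoint (X₀ i) (X₀ j) := by
      intro i j hij
      simp only [hX₀]
      by_cases h1 : i ∈ S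
      · simp [h1]
      · by_cases h2 : j ∈ S
        · simp [h2]
        · simp only [if_neg h1, if_neg h2]
          rw [Finset.disjoint_singleton]
          intro heq
          have hmem1 : γ i ∈ Xs i := (hfam i h1).1
          have hmem2 : γ j ∈ Xs j := (hfam j h2).1
          rw [heq] at hmem1
          exact Finset.disjoint_left.mp (hXsd i j hij) (heq ▸ (hfam i h1).1) hmem2
    have h₀e : ∀ i j, ∀ g ∈ X₀ j, v i (X₀ j \ {g}) ≤ 2 * v i (X₀ i) := by
      intro i j g hg
      simp only [hX₀] at hg ⊢
      by_cases h2 : j ∈ S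
      · rw [if_pos h2] at hg; exact absurd hg (Finset.notMem_empty g)
      · rw [if_neg h2] at hg ⊢
        rw [Finset.mem_singleton.mp hg, Finset.sdiff_self, hnorm]
        have := hv0 i (if i ∈ S then (∅ : Finset G) else {γ i})
        linarith
    obtain ⟨Xh, hXhM, hXhd, hXhe, hXhc, hXhg⟩ :=
      completion hn M v hv0 hnorm hmono hsub X₀ h₀M h₀d h₀e
    by_cases hgood : ∀ a, c'' * v a (Xs a) ≤ v a (Xh a)
    · exact ⟨Xh, hXhM, hXhd, hXhe, hXhc, hgood⟩
    · push_neg at hgood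
      obtain ⟨a, ha⟩ := hgood
      have haS : a ∈ S := by
        by_contra h
        have h1 := (hfam a h).2
        have h2 : v a (X₀ a) = v a {γ a} := by
          simp only [hX₀, if_neg h]
        have h3 := hXhg a
        rw [h2] at h3
        linarith
      obtain ⟨γ', hγ'Xs, hγ'val⟩ :=
        deficiency hn M v hv0 hnorm hmono hsub Xs a (hXsM a) Xh hXhe hXhc ha
      have hval : c'' * v a (Xs a) ≤ v a {γ'} := by
        have h1 : c'' * v a (Xs a) ≤ v a (Xs a) / (2 * (n : ℝ)) := by
          have hw0 : 0 ≤ v a (Xs a) := hv0 a (Xs a)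
          have h2 : c'' ≤ 1 / (2 * (n : ℝ)) := by
            apply one_div_le_one_div_of_le (by positivity)
            nlinarith
          calc c'' * v a (Xs a) ≤ (1 / (2 * (n : ℝ))) * v a (Xs a) :=
                mul_le_mul_of_nonneg_right h2 hw0
            _ = v a (Xs a) / (2 * (n : ℝ)) := by ring
        linarith
      apply ih (S.erase a) (Finset.erase_ssubset haS) (Function.update γ a γ')
      intro α hα
      by_cases hαa : α = a
      · subst hαa
        rw [Function.update_self]
        exact ⟨hγ'Xs, hval⟩
      · rw [Function.update_of_ne hαa]
        apply hfam
        intro hαS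
        exact hα (Finset.mem_erase.mpr ⟨hαa, hαS⟩)


end Stmt17

/-- STATEMENT 17 (Main theorem, complete allocation, `p ∈ (0,1]`): For every
`ε ∈ (0, 1/2)` there is a complete `(1/2 - ε)`-EFX allocation `X` such that
for every allocation `X*`, `Σ_i v i (X i)^p ≥ ((1-2ε)/(8(n+1)))^p · Σ_i v i (X* i)^p`,
equivalently its `p`-mean welfare is at least `(1-2ε)/(8(n+1))` times that of `X*`. -/
theorem main_complete_pos_p
    {G : Type*} [DecidableEq G]
    (n : ℕ) (hn : 0 < n) (M : Finset G) (hm : n ≤ M.card)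
    (v : Fin n → Finset G → ℝ)
    (hv0 : ∀ i A, 0 ≤ v i A)
    (hnorm : ∀ i, v i ∅ = 0)
    (hmono : ∀ i A B, A ⊆ B → v i A ≤ v i B)
    (hsub : ∀ i A B, v i (A ∪ B) ≤ v i A + v i B)
    (p : ℝ) (hp0 : 0 < p) (hp1 : p ≤ 1)
    (ε : ℝ) (hε0 : 0 < ε) (hε1 : ε < 1 / 2) :
    ∃ X : Fin n → Finset G,
      (∀ i, X i ⊆ M) ∧
      (∀ i j, i ≠ j → Disjoint (X i) (X j)) ∧
      (Finset.univ.biUnion X = M) ∧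
      (∀ i j, ∀ g ∈ X j, (1 / 2 - ε) * v i (X j \ {g}) ≤ v i (X i)) ∧
      (∀ Xs : Fin n → Finset G, (∀ i, Xs i ⊆ M) →
        (∀ i j, i ≠ j → Disjoint (Xs i) (Xs j)) →
        ((1 - 2 * ε) / (8 * ((n : ℝ) + 1))) ^ p * ∑ i, v i (Xs i) ^ p
            ≤ ∑ i, v i (X i) ^ p
        ∧ ((1 - 2 * ε) / (8 * ((n : ℝ) + 1))) *
              (((1 : ℝ) / n) * ∑ i, v i (Xs i) ^ p) ^ (1 / p)
            ≤ (((1 : ℝ) / n) * ∑ i, v i (X i) ^ p) ^ (1 / p)) := by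
  classical
  have hnR : (0 : ℝ) < (n : ℝ) := by exact_mod_cast hn
  set c : ℝ := (1 - 2 * ε) / (8 * ((n : ℝ) + 1)) with hc
  set c'' : ℝ := 1 / (8 * ((n : ℝ) + 1)) with hc''
  have hden : (0 : ℝ) < 8 * ((n : ℝ) + 1) := by positivity
  have hc0 : 0 ≤ c := by
    apply div_nonneg _ (le_of_lt hden)
    linarith
  have hcc'' : c ≤ c'' := by
    rw [hc, hc'']
    gcongr
    linarith

  -- the finite set of complete ½-EFX allocations
  set P : (Fin n → Finset G) → Prop := fun X =>
    (∀ i, X i ⊆ M) ∧ (∀ i j, i ≠ j → Disjoint (X i) (X j)) ∧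
    (∀ i j, ∀ g ∈ X j, v i (X j \ {g}) ≤ 2 * v i (X i)) ∧
    Finset.univ.biUnion X = M with hP
  set T : Finset (Fin n → Finset G) :=
    (Fintype.piFinset fun _ : Fin n => M.powerset).filter P with hT
  have hPT : ∀ X, P X → X ∈ T := by
    intro X hX
    exact Finset.mem_filter.mpr
      ⟨Fintype.mem_piFinset.mpr fun i => Finset.mem_powerset.mpr (hX.1 i), hX⟩
  -- nonempty: junk element
  obtain ⟨g₁, hg₁⟩ := Finset.card_pos.mp (lt_of_lt_of_le hn hm)
  have hTne : T.Nonempty := by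
    obtain ⟨X', h1, h2, h3, h4, _⟩ :=
      Stmt17.Zrec hn M v hv0 hnorm hmono hsub (fun _ => (∅ : Finset G))
        (fun i => Finset.empty_subset M) (fun i j _ => Finset.disjoint_empty_left _)
        Finset.univ (fun _ => g₁) (fun α hα => absurd (Finset.mem_univ α) hα)
    exact ⟨X', hPT X' ⟨h1, h2, h3, h4⟩⟩
  obtain ⟨Xm, hXmT, hXmmax⟩ := T.exists_max_image (fun X => ∑ i, v i (X i) ^ p) hTne
  obtain ⟨hM', hd', he', hc'⟩ := (Finset.mem_filter.mp hXmT).2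
  refine ⟨Xm, hM', hd', hc', ?_, ?_⟩
  · -- EFX with factor 1/2 - ε
    intro i j g hg
    have h1 := he' i j g hg
    have h2 := hv0 i (Xm j \ {g})
    have h3 := hε0
    nlinarith
  · -- welfare
    intro Xs hXsM hXsd
    obtain ⟨X', hX'M, hX'd, hX'e, hX'c, hX'g⟩ :=
      Stmt17.Zrec hn M v hv0 hnorm hmono hsub Xs hXsM hXsd
        Finset.univ (fun _ => g₁) (fun α hα => absurd (Finset.mem_univ α) hα)
    have hle : ∑ i, v i (X' i) ^ p ≤ ∑ i, v i (Xm i) ^ p :=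
      hXmmax X' (hPT X' ⟨hX'M, hX'd, hX'e, hX'c⟩)
    have h1 : ∀ a : Fin n, (c * v a (Xs a)) ^ p ≤ v a (X' a) ^ p := by
      intro a
      apply Real.rpow_le_rpow (mul_nonneg hc0 (hv0 a (Xs a)))
      · calc c * v a (Xs a) ≤ c'' * v a (Xs a) :=
              mul_le_mul_of_nonneg_right hcc'' (hv0 a (Xs a))
          _ ≤ v a (X' a) := hX'g a
      · exact le_of_lt hp0
    have hfirst : c ^ p * ∑ i, v i (Xs i) ^ p ≤ ∑ i, v i (Xm i) ^ p := by
      calc c ^ p * ∑ i, v i (Xs i) ^ p = ∑ i, c ^ p * v i (Xs i) ^ p := by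
            rw [Finset.mul_sum]
        _ = ∑ i, (c * v i (Xs i)) ^ p := by
            apply Finset.sum_congr rfl
            intro i _
            rw [Real.mul_rpow hc0 (hv0 i (Xs i))]
        _ ≤ ∑ i, v i (X' i) ^ p := Finset.sum_le_sum (fun i _ => h1 i)
        _ ≤ ∑ i, v i (Xm i) ^ p := hle
    refine ⟨hfirst, ?_⟩
    -- p-mean form
    set A : ℝ := ∑ i, v i (Xs i) ^ p with hA
    set B : ℝ := ∑ i, v i (Xm i) ^ p with hB
    have hA0 : 0 ≤ A := Finset.sum_nonneg fun i _ => Real.rpow_nonneg (hv0 i (Xs i)) p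
    have hB0 : 0 ≤ B := Finset.sum_nonneg fun i _ => Real.rpow_nonneg (hv0 i (Xm i)) p
    have hn0 : (0:ℝ) ≤ 1 / (n:ℝ) := by positivity
    have h2 : c ^ p * ((1 / (n:ℝ)) * A) ≤ (1 / (n:ℝ)) * B := by
      have : c ^ p * ((1 / (n:ℝ)) * A) = (1 / (n:ℝ)) * (c ^ p * A) := by ring
      rw [this]
      exact mul_le_mul_of_nonneg_left hfirst hn0
    have h3 : (c ^ p * ((1 / (n:ℝ)) * A)) ^ (1/p) ≤ ((1 / (n:ℝ)) * B) ^ (1/p) := by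
      apply Real.rpow_le_rpow _ h2 (by positivity)
      exact mul_nonneg (Real.rpow_nonneg hc0 p) (mul_nonneg hn0 hA0)
    have h4 : (c ^ p * ((1 / (n:ℝ)) * A)) ^ (1/p)
        = (c ^ p) ^ (1/p) * ((1 / (n:ℝ)) * A) ^ (1/p) :=
      Real.mul_rpow (Real.rpow_nonneg hc0 p) (mul_nonneg hn0 hA0)
    have h5 : (c ^ p) ^ (1/p) = c := by
      rw [← Real.rpow_mul hc0]
      rw [mul_one_div, div_self (ne_of_gt hp0), Real.rpow_one]
    rw [h4, h5] at h3
    exact h3
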